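/- Let κ > 0 and 0 ≤ v < 1. Then for every real u > 2, u·μ^{(κ)}(u,v) = κ·∫_{u−1}^{u} μ^{(κ)}(s,v) ds. -/

import Mathlib

open MeasureTheory

/-- The region `V_k(u,v)`. -/
def Vk (k : ℕ) (u v : ℝ) : Set (Fin k → ℝ) :=
  {t | (∀ i, t i ∈ Set.Ioo (0:ℝ) 1) ∧
    (∑ i ∈ Finset.univ.filter (fun i : Fin k => (i : ℕ) < k - 1), t i) < u - 1 ∧
    u - 1 < ∑ i, t i ∧ ∑ i, t i < u - v}

/-- The function `μ_k(u,v)`. -/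
noncomputable def muk (k : ℕ) (u v : ℝ) : ℝ :=
  if k = 1 then
    u⁻¹ * (volume (Set.Ioo (0:ℝ) 1 ∩ Set.Ioo (u-1) (u-v))).toReal
  else
    u⁻¹ * ∫ t in Vk k u v,
      ∏ j ∈ Finset.univ.filter (fun j : Fin k => (j : ℕ) < k - 1),
        (u - ∑ i ∈ Finset.univ.filter (fun i : Fin k => i ≤ j), t i)⁻¹

/-- `μ^{(κ)}(u,v) = ∑_{k ≥ 1} κ^k μ_k(u,v)`. -/
noncomputable def mukappa (κ u v : ℝ) : ℝ := ∑' k : ℕ, κ ^ (k+1) * muk (k+1) u v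

/-- The integrand of `μ_k`. -/
noncomputable def Fprod (k : ℕ) (u : ℝ) (t : Fin k → ℝ) : ℝ :=
  ∏ j ∈ Finset.univ.filter (fun j : Fin k => (j : ℕ) < k - 1),
    (u - ∑ i ∈ Finset.univ.filter (fun i : Fin k => i ≤ j), t i)⁻¹

section Plumbing

lemma sum_cons_head (k : ℕ) (hk : 1 ≤ k) (x : ℝ) (t : Fin k → ℝ) :
    ∑ i ∈ Finset.univ.filter (fun i : Fin (k+1) => (i : ℕ) < (k+1) - 1), Fin.cons x t i
      = x + ∑ i ∈ Finset.univ.filter (fun i : Fin k => (i : ℕ) < k - 1), t i := by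
  rw [Finset.sum_filter, Finset.sum_filter, Fin.sum_univ_succ]
  simp only [Fin.cons_zero, Fin.cons_succ, Fin.val_zero, Fin.val_succ]
  rw [if_pos (by omega)]
  congr 1
  refine Finset.sum_congr rfl fun i _ => ?_
  congr 1
  simp only [Nat.add_sub_cancel]
  exact propext (by omega)

lemma sum_cons_le_succ (k : ℕ) (x : ℝ) (t : Fin k → ℝ) (j : Fin k) :
    ∑ i ∈ Finset.univ.filter (fun i : Fin (k+1) => i ≤ j.succ), Fin.cons x t i
      = x + ∑ i ∈ Finset.univ.filter (fun i : Fin k => i ≤ j), t i := by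
  rw [Finset.sum_filter, Finset.sum_filter, Fin.sum_univ_succ]
  simp only [Fin.cons_zero, Fin.cons_succ]
  rw [if_pos (Fin.zero_le _)]
  congr 1
  refine Finset.sum_congr rfl fun i _ => ?_
  congr 1
  exact propext Fin.succ_le_succ_iff

lemma sum_cons_le_zero (k : ℕ) (x : ℝ) (t : Fin k → ℝ) :
    ∑ i ∈ Finset.univ.filter (fun i : Fin (k+1) => i ≤ (0 : Fin (k+1))), Fin.cons x t i = x := by
  rw [Finset.sum_filter, Fin.sum_univ_succ]
  simp [Fin.le_zero_iff, Fin.succ_ne_zero]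

lemma Fprod_cons (k : ℕ) (hk : 1 ≤ k) (u x : ℝ) (t : Fin k → ℝ) :
    Fprod (k+1) u (Fin.cons x t) = (u - x)⁻¹ * Fprod k (u - x) t := by
  unfold Fprod
  rw [Finset.prod_filter, Finset.prod_filter, Fin.prod_univ_succ]
  rw [Nat.add_sub_cancel]
  rw [if_pos (show ((0 : Fin (k+1)) : ℕ) < k by simpa using (show 0 < k by omega))]
  rw [sum_cons_le_zero]
  congr 1
  refine Finset.prod_congr rfl fun j _ => ?_
  rw [sum_cons_le_succ]
  have : ((j.succ : Fin (k+1)) : ℕ) < k ↔ (j : ℕ) < k - 1 := by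
    simp only [Fin.val_succ]; omega
  by_cases h : (j : ℕ) < k - 1
  · rw [if_pos (this.mpr h), if_pos h]
    ring_nf
  · rw [if_neg (fun hh => h (this.mp hh)), if_neg h]

lemma cons_mem_Vk (k : ℕ) (hk : 1 ≤ k) (u v x : ℝ) (t : Fin k → ℝ) :
    Fin.cons x t ∈ Vk (k+1) u v ↔ x ∈ Set.Ioo (0:ℝ) 1 ∧ t ∈ Vk k (u - x) v := by
  unfold Vk
  simp only [Set.mem_setOf_eq, Fin.sum_cons, sum_cons_head k hk x t]
  constructor
  · rintro ⟨h1, h2, h3, h4⟩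
    exact ⟨h1 0, fun i => by simpa using h1 i.succ, by linarith, by linarith, by linarith⟩
  · rintro ⟨hx, h1, h2, h3, h4⟩
    refine ⟨fun i => ?_, by linarith, by linarith, by linarith⟩
    refine Fin.cases ?_ ?_ i
    · simpa using hx
    · intro j; simpa using h1 j

lemma cons_eq (k : ℕ) (x : ℝ) (t : Fin k → ℝ) :
    (MeasurableEquiv.piFinSuccAbove (fun _ : Fin (k+1) => ℝ) 0).symm (x, t) = Fin.cons x t := by
  simp [MeasurableEquiv.piFinSuccAbove, Fin.insertNthEquiv, Fin.insertNth_zero]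

end Plumbing

section Simplex

lemma measurable_sumFin (k : ℕ) (s : Finset (Fin k)) :
    Measurable (fun t : Fin k → ℝ => ∑ i ∈ s, t i) :=
  Finset.measurable_sum s fun i _ => measurable_pi_apply i

lemma measurableSet_simplex (k : ℕ) (s : ℝ) :
    MeasurableSet {t : Fin k → ℝ | (∀ i, 0 < t i) ∧ ∑ i, t i < s} := by
  rw [show {t : Fin k → ℝ | (∀ i, 0 < t i) ∧ ∑ i, t i < s}
      = (⋂ i, {t : Fin k → ℝ | 0 < t i}) ∩ {t : Fin k → ℝ | ∑ i, t i < s} by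
    ext t; simp [Set.mem_iInter]]
  exact (MeasurableSet.iInter fun i =>
      measurableSet_lt measurable_const (measurable_pi_apply i)).inter
    (measurableSet_lt (measurable_sumFin k Finset.univ) measurable_const)

lemma vol_univ_fin_zero : volume (Set.univ : Set (Fin 0 → ℝ)) = 1 := by
  rw [show (Set.univ : Set (Fin 0 → ℝ)) = Set.univ.pi (fun _ : Fin 0 => (Set.univ : Set ℝ))
    from (Set.pi_univ _).symm, volume_pi_pi]
  simp

lemma volume_simplex_le (k : ℕ) (s : ℝ) (hs : 0 ≤ s) :
    volume {t : Fin k → ℝ | (∀ i, 0 < t i) ∧ ∑ i, t i < s}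
      ≤ ENNReal.ofReal (s ^ k / k.factorial) := by
  induction k generalizing s with
  | zero =>
    simp only [pow_zero, Nat.factorial_zero, Nat.cast_one, div_one]
    calc volume {t : Fin 0 → ℝ | (∀ i, 0 < t i) ∧ ∑ i, t i < s}
        ≤ volume (Set.univ : Set (Fin 0 → ℝ)) := measure_mono (Set.subset_univ _)
      _ = 1 := vol_univ_fin_zero
      _ ≤ ENNReal.ofReal 1 := by simp
  | succ k ih =>
    set e := MeasurableEquiv.piFinSuccAbove (fun _ : Fin (k+1) => ℝ) 0 with he
    have hmp := MeasureTheory.volume_preserving_piFinSuccAbove (fun _ : Fin (k+1) => ℝ) 0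
    set S := {t : Fin (k+1) → ℝ | (∀ i, 0 < t i) ∧ ∑ i, t i < s} with hS
    have hSm : MeasurableSet S := measurableSet_simplex (k+1) s
    have key : volume S = (volume.prod volume) (⇑e.symm ⁻¹' S) :=
      ((hmp.symm e).measure_preimage hSm.nullMeasurableSet).symm
    rw [key, Measure.prod_apply (e.symm.measurable hSm)]
    have hsec : ∀ x : ℝ, volume (Prod.mk x ⁻¹' (⇑e.symm ⁻¹' S))
        ≤ (Set.Ioo (0:ℝ) s).indicator (fun x => ENNReal.ofReal ((s-x)^k / k.factorial)) x := by
      intro x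
      have hsec_eq : Prod.mk x ⁻¹' (⇑e.symm ⁻¹' S)
          = {t : Fin k → ℝ | 0 < x ∧ (∀ i, 0 < t i) ∧ ∑ i, t i < s - x} := by
        ext t
        simp only [Set.mem_preimage]
        rw [show e.symm (x, t) = Fin.cons x t from cons_eq k x t]
        simp only [hS, Set.mem_setOf_eq, Fin.sum_cons]
        constructor
        · rintro ⟨h1, h2⟩
          exact ⟨h1 0, fun i => by simpa using h1 i.succ, by linarith⟩
        · rintro ⟨hx, h1, h2⟩
          refine ⟨fun i => Fin.cases (by simpa using hx) (fun j => by simpa using h1 j) i,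
            by linarith⟩
      rw [hsec_eq]
      by_cases hx : x ∈ Set.Ioo (0:ℝ) s
      · rw [Set.indicator_of_mem hx]
        calc volume {t : Fin k → ℝ | 0 < x ∧ (∀ i, 0 < t i) ∧ ∑ i, t i < s - x}
            ≤ volume {t : Fin k → ℝ | (∀ i, 0 < t i) ∧ ∑ i, t i < s - x} :=
              measure_mono (fun t ht => ⟨ht.2.1, ht.2.2⟩)
          _ ≤ ENNReal.ofReal ((s-x)^k / k.factorial) := ih _ (by linarith [hx.2])
      · rw [Set.indicator_of_notMem hx]
        have : {t : Fin k → ℝ | 0 < x ∧ (∀ i, 0 < t i) ∧ ∑ i, t i < s - x} = ∅ := by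
          ext t
          simp only [Set.mem_setOf_eq, Set.mem_empty_iff_false, iff_false, not_and]
          intro hx0 h1 h2
          have : (0:ℝ) ≤ ∑ i, t i := Finset.sum_nonneg fun i _ => (h1 i).le
          exact hx (Set.mem_Ioo.2 ⟨hx0, by linarith⟩)
        rw [this, measure_empty]
    calc ∫⁻ x, volume (Prod.mk x ⁻¹' (⇑e.symm ⁻¹' S))
        ≤ ∫⁻ x, (Set.Ioo (0:ℝ) s).indicator
            (fun x => ENNReal.ofReal ((s-x)^k / k.factorial)) x := lintegral_mono hsec
      _ = ∫⁻ x in Set.Ioo (0:ℝ) s, ENNReal.ofReal ((s-x)^k / k.factorial) := by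
          rw [lintegral_indicator measurableSet_Ioo]
      _ = ENNReal.ofReal (∫ x in Set.Ioo (0:ℝ) s, (s-x)^k / k.factorial) := by
          rw [← ofReal_integral_eq_lintegral_ofReal]
          · exact ((Continuous.continuousOn (by continuity)).integrableOn_compact
              isCompact_Icc).mono_set Set.Ioo_subset_Icc_self
          · filter_upwards [ae_restrict_mem measurableSet_Ioo] with x hx
            have : (0:ℝ) ≤ (s-x)^k := pow_nonneg (by linarith [hx.2]) k
            positivity
      _ = ENNReal.ofReal (s ^ (k+1) / (k+1).factorial) := by
          congr 1
          rw [← integral_Ioc_eq_integral_Ioo, ← intervalIntegral.integral_of_le hs]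
          rw [intervalIntegral.integral_div]
          rw [intervalIntegral.integral_comp_sub_left (fun y => y ^ k) s]
          simp only [sub_zero, sub_self]
          rw [integral_pow]
          rw [Nat.factorial_succ]
          have hf : (k.factorial : ℝ) ≠ 0 := Nat.cast_ne_zero.2 k.factorial_ne_zero
          push_cast
          field_simp
          simp

end Simplex

section VkBounds

lemma measurableSet_Vk (k : ℕ) (u v : ℝ) : MeasurableSet (Vk k u v) := by
  rw [show Vk k u v = (⋂ i, {t : Fin k → ℝ | t i ∈ Set.Ioo (0:ℝ) 1})
      ∩ ({t : Fin k → ℝ | (∑ i ∈ Finset.univ.filter (fun i : Fin k => (i : ℕ) < k - 1), t i) < u - 1}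
      ∩ ({t : Fin k → ℝ | u - 1 < ∑ i, t i} ∩ {t : Fin k → ℝ | ∑ i, t i < u - v})) by
    ext t; simp [Vk, Set.mem_iInter]]
  refine (MeasurableSet.iInter fun i => (measurable_pi_apply i) measurableSet_Ioo).inter
    (((measurableSet_lt (measurable_sumFin k _) measurable_const)).inter
      ((measurableSet_lt measurable_const (measurable_sumFin k _)).inter
        (measurableSet_lt (measurable_sumFin k _) measurable_const)))

lemma measurable_Fprod (k : ℕ) (u : ℝ) : Measurable (Fprod k u) :=
  Finset.measurable_prod _ fun j _ => (measurable_const.sub (measurable_sumFin k _)).inv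

lemma one_le_sub_of_mem_Vk {k : ℕ} {u v : ℝ} {t : Fin k → ℝ} (ht : t ∈ Vk k u v)
    {j : Fin k} (hj : (j : ℕ) < k - 1) :
    1 ≤ u - ∑ i ∈ Finset.univ.filter (fun i : Fin k => i ≤ j), t i := by
  have hsub : ∑ i ∈ Finset.univ.filter (fun i : Fin k => i ≤ j), t i
      ≤ ∑ i ∈ Finset.univ.filter (fun i : Fin k => (i : ℕ) < k - 1), t i := by
    refine Finset.sum_le_sum_of_subset_of_nonneg ?_ fun i _ _ => (ht.1 i).1.le
    intro i hi
    simp only [Finset.mem_filter, Finset.mem_univ, true_and] at hi ⊢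
    exact lt_of_le_of_lt (by exact_mod_cast hi) hj
  have := ht.2.1
  linarith

lemma Fprod_nonneg {k : ℕ} {u v : ℝ} {t : Fin k → ℝ} (ht : t ∈ Vk k u v) :
    0 ≤ Fprod k u t :=
  Finset.prod_nonneg fun j hj => inv_nonneg.2 (by
    have := one_le_sub_of_mem_Vk ht (Finset.mem_filter.1 hj).2; linarith)

lemma Fprod_le_one {k : ℕ} {u v : ℝ} {t : Fin k → ℝ} (ht : t ∈ Vk k u v) :
    Fprod k u t ≤ 1 := by
  refine Finset.prod_le_one (fun j hj => inv_nonneg.2 (by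
      have := one_le_sub_of_mem_Vk ht (Finset.mem_filter.1 hj).2; linarith))
    (fun j hj => ?_)
  have h1 := one_le_sub_of_mem_Vk ht (Finset.mem_filter.1 hj).2
  rw [inv_le_one₀ (by linarith)]
  exact h1

lemma vol_box_le (k : ℕ) (u v : ℝ) : volume (Vk k u v) ≤ 1 := by
  calc volume (Vk k u v) ≤ volume (Set.univ.pi fun _ : Fin k => Set.Ioo (0:ℝ) 1) := by
        refine measure_mono fun t ht => ?_
        rw [Set.mem_univ_pi]
        exact fun i => ht.1 i
    _ = 1 := by rw [volume_pi_pi]; simp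

lemma integrableOn_Fprod (k : ℕ) (u v : ℝ) : IntegrableOn (Fprod k u) (Vk k u v) := by
  refine Measure.integrableOn_of_bounded (M := 1)
    (lt_of_le_of_lt (vol_box_le k u v) ENNReal.one_lt_top).ne
    (measurable_Fprod k u).aestronglyMeasurable ?_
  rw [ae_restrict_iff' (measurableSet_Vk k u v)]
  exact ae_of_all _ fun t ht => abs_le.2 ⟨by linarith [Fprod_nonneg ht], Fprod_le_one ht⟩

lemma vol_Vk_le (k : ℕ) (u v : ℝ) (h0 : 0 ≤ v) (h1 : v ≤ u) :
    volume (Vk k u v) ≤ ENNReal.ofReal (u ^ k / k.factorial) := by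
  calc volume (Vk k u v)
      ≤ volume {t : Fin k → ℝ | (∀ i, 0 < t i) ∧ ∑ i, t i < u - v} :=
        measure_mono fun t ht => ⟨fun i => (ht.1 i).1, ht.2.2.2⟩
    _ ≤ ENNReal.ofReal ((u - v) ^ k / k.factorial) := volume_simplex_le k _ (by linarith)
    _ ≤ ENNReal.ofReal (u ^ k / k.factorial) := by
        apply ENNReal.ofReal_le_ofReal
        gcongr
        · linarith

end VkBounds

section MukBasic

lemma Fprod_one (u : ℝ) (t : Fin 1 → ℝ) : Fprod 1 u t = 1 := by
  unfold Fprod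
  rw [Finset.prod_filter]
  simp

lemma Vk_one_eq (s v : ℝ) (hs : 1 < s) :
    Vk 1 s v = (MeasurableEquiv.funUnique (Fin 1) ℝ) ⁻¹'
      (Set.Ioo (0:ℝ) 1 ∩ Set.Ioo (s-1) (s-v)) := by
  ext t
  simp only [Vk, Set.mem_setOf_eq, Set.mem_preimage, Set.mem_inter_iff,
    MeasurableEquiv.funUnique_apply, Fin.sum_univ_one]
  have h0 : (Finset.univ.filter (fun i : Fin 1 => (i : ℕ) < 1 - 1)) = ∅ := by
    ext i; simp
  rw [h0]
  simp only [Finset.sum_empty]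
  have hd : (default : Fin 1) = 0 := rfl
  rw [hd]
  constructor
  · rintro ⟨h1, _, h3, h4⟩
    exact ⟨h1 0, h3, h4⟩
  · rintro ⟨h1, h3, h4⟩
    exact ⟨fun i => by simpa [Subsingleton.elim i 0] using h1, by linarith, h3, h4⟩

lemma muk_eq (k : ℕ) (hk : 1 ≤ k) (s v : ℝ) (hs : 1 < s) :
    muk k s v = s⁻¹ * ∫ t in Vk k s v, Fprod k s t := by
  rcases eq_or_ne k 1 with rfl | hne
  · rw [muk, if_pos rfl]
    congr 1
    have : ∫ t in Vk 1 s v, Fprod 1 s t = ∫ (_ : Fin 1 → ℝ) in Vk 1 s v, (1:ℝ) := by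
      refine setIntegral_congr_fun (measurableSet_Vk 1 s v) fun t _ => Fprod_one s t
    rw [this, setIntegral_const, smul_eq_mul, mul_one]
    rw [Vk_one_eq s v hs]
    rw [measureReal_def]
    exact congrArg ENNReal.toReal ((MeasureTheory.volume_preserving_funUnique (Fin 1) ℝ).measure_preimage
      ((measurableSet_Ioo.inter measurableSet_Ioo).nullMeasurableSet)).symm
  · rw [muk, if_neg hne]
    rfl

lemma muk_nonneg (k : ℕ) (hk : 1 ≤ k) (s v : ℝ) (hs : 1 < s) : 0 ≤ muk k s v := by
  rw [muk_eq k hk s v hs]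
  refine mul_nonneg (inv_nonneg.2 (by linarith)) ?_
  exact setIntegral_nonneg (measurableSet_Vk k s v) fun t ht => Fprod_nonneg ht

lemma muk_le (k : ℕ) (hk : 1 ≤ k) (s v : ℝ) (hs : 1 < s) (hv0 : 0 ≤ v) (hv : v < 1) :
    muk k s v ≤ s ^ k / k.factorial := by
  rw [muk_eq k hk s v hs]
  have hI : ∫ t in Vk k s v, Fprod k s t ≤ (volume (Vk k s v)).toReal := by
    calc ∫ t in Vk k s v, Fprod k s t
        ≤ ∫ (_ : Fin k → ℝ) in Vk k s v, (1:ℝ) := by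
          refine setIntegral_mono_on (integrableOn_Fprod k s v) ?_
            (measurableSet_Vk k s v) fun t ht => Fprod_le_one ht
          exact integrableOn_const (lt_of_le_of_lt (vol_box_le k s v)
            ENNReal.one_lt_top).ne
      _ = (volume (Vk k s v)).toReal := by rw [setIntegral_const, smul_eq_mul, mul_one, measureReal_def]
  have hvol : (volume (Vk k s v)).toReal ≤ s ^ k / k.factorial := by
    refine ENNReal.toReal_le_of_le_ofReal (by positivity) ?_
    exact vol_Vk_le k s v hv0 (by linarith)
  have h0 : 0 ≤ ∫ t in Vk k s v, Fprod k s t :=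
    setIntegral_nonneg (measurableSet_Vk k s v) fun t ht => Fprod_nonneg ht
  calc s⁻¹ * ∫ t in Vk k s v, Fprod k s t ≤ 1 * (s ^ k / k.factorial) := by
        refine mul_le_mul ?_ (hI.trans hvol) h0 zero_le_one
        rw [inv_le_one₀ (by linarith)]; linarith
    _ = s ^ k / k.factorial := one_mul _
end MukBasic

section Key

set_option maxHeartbeats 1000000 in
lemma key_recursion (k : ℕ) (hk : 1 ≤ k) (u v : ℝ) (hu : 2 < u) (hv0 : 0 ≤ v) (hv : v < 1) :
    u * muk (k+1) u v = ∫ s in (u-1)..u, muk k s v := by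
  have hu1 : (1:ℝ) < u := by linarith
  have hu0 : u ≠ 0 := by linarith
  set e := MeasurableEquiv.piFinSuccAbove (fun _ : Fin (k+1) => ℝ) 0 with he
  have hmp := MeasureTheory.volume_preserving_piFinSuccAbove (fun _ : Fin (k+1) => ℝ) 0
  set V := Vk (k+1) u v with hV
  set A := ⇑e.symm ⁻¹' V with hA
  have hVm : MeasurableSet V := measurableSet_Vk (k+1) u v
  have hAm : MeasurableSet A := e.symm.measurable hVm
  have hmemA : ∀ (x : ℝ) (t : Fin k → ℝ),
      ((x, t) ∈ A ↔ x ∈ Set.Ioo (0:ℝ) 1 ∧ t ∈ Vk k (u - x) v) := by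
    intro x t
    rw [hA, Set.mem_preimage, show e.symm (x, t) = Fin.cons x t from cons_eq k x t, hV]
    exact cons_mem_Vk k hk u v x t
  have hGcons : ∀ (x : ℝ) (t : Fin k → ℝ),
      Fprod (k+1) u (e.symm (x, t)) = (u - x)⁻¹ * Fprod k (u - x) t := by
    intro x t
    rw [show e.symm (x, t) = Fin.cons x t from cons_eq k x t]
    exact Fprod_cons k hk u x t
  -- step 1 : write u * muk as set integral over V
  rw [muk_eq (k+1) (by omega) u v hu1, ← mul_assoc, mul_inv_cancel₀ hu0, one_mul]
  -- step 2 : transfer to the product space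
  rw [← (hmp.symm e).setIntegral_preimage_emb e.symm.measurableEmbedding
    (Fprod (k+1) u) V]
  -- step 3 : as an integral of an indicator over the whole product space
  rw [← integral_indicator hAm]
  -- step 4 : Fubini
  have hint : Integrable (A.indicator fun p : ℝ × (Fin k → ℝ) => Fprod (k+1) u (e.symm p))
      volume := by
    rw [integrable_indicator_iff hAm]
    have hvolA : volume A = volume V := (hmp.symm e).measure_preimage hVm.nullMeasurableSet
    refine Measure.integrableOn_of_bounded (M := 1) ?_ ?_ ?_
    · rw [hvolA]
      exact (lt_of_le_of_lt (vol_box_le (k+1) u v) ENNReal.one_lt_top).ne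
    · exact ((measurable_Fprod (k+1) u).comp e.symm.measurable).aestronglyMeasurable
    · rw [ae_restrict_iff' hAm]
      refine ae_of_all _ fun p hp => ?_
      obtain ⟨x, t⟩ := p
      have hmem : Fin.cons x t ∈ Vk (k+1) u v := by
        rw [← show e.symm (x, t) = Fin.cons x t from cons_eq k x t]
        exact hp
      rw [show e.symm (x, t) = Fin.cons x t from cons_eq k x t]
      exact abs_le.2 ⟨by linarith [Fprod_nonneg hmem], Fprod_le_one hmem⟩
  rw [Measure.volume_eq_prod] at hint ⊢
  rw [integral_prod _ hint]
  -- step 5 : compute the inner integral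
  have hinner : ∀ x : ℝ,
      (∫ t : Fin k → ℝ, A.indicator (fun p : ℝ × (Fin k → ℝ) => Fprod (k+1) u (e.symm p)) (x, t))
        = (Set.Ioo (0:ℝ) 1).indicator (fun x => muk k (u - x) v) x := by
    intro x
    by_cases hx : x ∈ Set.Ioo (0:ℝ) 1
    · rw [Set.indicator_of_mem hx]
      have hux : 1 < u - x := by
        have := hx.2; simp only [Set.mem_Ioo] at hx; linarith [hx.2]
      have hcong : (fun t : Fin k → ℝ =>
          A.indicator (fun p : ℝ × (Fin k → ℝ) => Fprod (k+1) u (e.symm p)) (x, t))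
          = fun t => (Vk k (u - x) v).indicator (fun t => (u - x)⁻¹ * Fprod k (u - x) t) t := by
        funext t
        by_cases ht : t ∈ Vk k (u - x) v
        · rw [Set.indicator_of_mem ((hmemA x t).2 ⟨hx, ht⟩), Set.indicator_of_mem ht, hGcons]
        · rw [Set.indicator_of_notMem (fun hmem => ht ((hmemA x t).1 hmem).2),
            Set.indicator_of_notMem ht]
      rw [hcong, integral_indicator (measurableSet_Vk k (u - x) v), integral_const_mul]
      rw [muk_eq k hk (u - x) v hux]
    · rw [Set.indicator_of_notMem hx]
      have hzero : (fun t : Fin k → ℝ =>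
          A.indicator (fun p : ℝ × (Fin k → ℝ) => Fprod (k+1) u (e.symm p)) (x, t))
          = fun _ => (0:ℝ) := by
        funext t
        exact Set.indicator_of_notMem (fun hmem => hx ((hmemA x t).1 hmem).1) _
      rw [hzero, integral_zero]
  rw [show (fun x : ℝ => ∫ t : Fin k → ℝ,
      A.indicator (fun p : ℝ × (Fin k → ℝ) => Fprod (k+1) u (e.symm p)) (x, t))
    = fun x : ℝ => (Set.Ioo (0:ℝ) 1).indicator (fun x => muk k (u - x) v) x
    from funext hinner]
  -- step 6 : outer integral as an interval integral
  rw [integral_indicator measurableSet_Ioo]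
  rw [← integral_Ioc_eq_integral_Ioo, ← intervalIntegral.integral_of_le (by norm_num : (0:ℝ) ≤ 1)]
  rw [intervalIntegral.integral_comp_sub_left (fun s => muk k s v) u]
  norm_num

end Key

section Main

/-- Jointly measurable version of the `μ_k` integral. -/
noncomputable def mukAux (k : ℕ) (v s : ℝ) : ℝ := s⁻¹ * ∫ t in Vk k s v, Fprod k s t

lemma muk_eq_mukAux (k : ℕ) (hk : 1 ≤ k) {s : ℝ} (v : ℝ) (hs : 1 < s) :
    muk k s v = mukAux k v s := muk_eq k hk s v hs

lemma measurable_mukAux (k : ℕ) (v : ℝ) : Measurable (mukAux k v) := by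
  set W : Set (ℝ × (Fin k → ℝ)) := {q | q.2 ∈ Vk k q.1 v} with hW
  have hsum : ∀ (c : Finset (Fin k)),
      Measurable (fun q : ℝ × (Fin k → ℝ) => ∑ i ∈ c, q.2 i) :=
    fun c => Finset.measurable_sum c fun i _ => (measurable_pi_apply i).comp measurable_snd
  have hWm : MeasurableSet W := by
    rw [show W = (⋂ i, {q : ℝ × (Fin k → ℝ) | q.2 i ∈ Set.Ioo (0:ℝ) 1})
        ∩ ({q : ℝ × (Fin k → ℝ) |
            (∑ i ∈ Finset.univ.filter (fun i : Fin k => (i : ℕ) < k - 1), q.2 i) < q.1 - 1}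
        ∩ ({q : ℝ × (Fin k → ℝ) | q.1 - 1 < ∑ i, q.2 i}
          ∩ {q : ℝ × (Fin k → ℝ) | ∑ i, q.2 i < q.1 - v})) by
      ext q; simp [hW, Vk, Set.mem_iInter]]
    refine (MeasurableSet.iInter fun i =>
        ((measurable_pi_apply i).comp measurable_snd) measurableSet_Ioo).inter
      ((measurableSet_lt (hsum _) (measurable_fst.sub measurable_const)).inter
        ((measurableSet_lt (measurable_fst.sub measurable_const) (hsum _)).inter
          (measurableSet_lt (hsum _) (measurable_fst.sub measurable_const))))
  have hPhi : Measurable (fun q : ℝ × (Fin k → ℝ) => Fprod k q.1 q.2) := by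
    refine Finset.measurable_prod _ fun j _ => ?_
    exact (measurable_fst.sub (hsum _)).inv
  have hind : StronglyMeasurable (W.indicator (fun q : ℝ × (Fin k → ℝ) => Fprod k q.1 q.2)) :=
    (hPhi.indicator hWm).stronglyMeasurable
  have hI : Measurable (fun s : ℝ => ∫ t : Fin k → ℝ,
      W.indicator (fun q : ℝ × (Fin k → ℝ) => Fprod k q.1 q.2) (s, t)) :=
    (hind.integral_prod_right').measurable
  have heq : (fun s : ℝ => ∫ t : Fin k → ℝ,
      W.indicator (fun q : ℝ × (Fin k → ℝ) => Fprod k q.1 q.2) (s, t))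
      = fun s : ℝ => ∫ t in Vk k s v, Fprod k s t := by
    funext s
    rw [← integral_indicator (measurableSet_Vk k s v)]
    congr 1
  rw [heq] at hI
  exact measurable_inv.mul hI

lemma muk_one_eq_zero (u v : ℝ) (hu : 2 < u) (hv0 : 0 ≤ v) : muk 1 u v = 0 := by
  rw [muk, if_pos rfl]
  have : Set.Ioo (0:ℝ) 1 ∩ Set.Ioo (u-1) (u-v) = ∅ := by
    ext x
    simp only [Set.mem_inter_iff, Set.mem_Ioo, Set.mem_empty_iff_false, iff_false, not_and]
    intro h1 h2 h3
    linarith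
  rw [this, measure_empty, ENNReal.toReal_zero, mul_zero]

/-- Integral equation for `μ^{(κ)}` for `u > 2` (Proposition 3.4, (3.8)). -/
theorem mukappa_integral_equation (κ : ℝ) (hκ : 0 < κ) (v : ℝ) (hv0 : 0 ≤ v) (hv : v < 1) :
    ∀ u : ℝ, 2 < u → u * mukappa κ u v = κ * ∫ s in (u-1)..u, mukappa κ s v := by
  intro u hu
  have hu1 : (1:ℝ) < u := by linarith
  have hu0 : (0:ℝ) < u := by linarith
  have hle : u - 1 ≤ u := by linarith
  have h1u : (1:ℝ) < u - 1 := by linarith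
  -- the summands
  set a : ℕ → ℝ := fun k => κ^(k+1) * (u * muk (k+1) u v) with ha
  -- the comparison series
  have hbsum : Summable (fun k : ℕ => u * ((κ*u)^(k+1) / ((k+1).factorial : ℝ))) :=
    (((summable_nat_add_iff 1).2 (Real.summable_pow_div_factorial (κ*u)))).mul_left u
  have hmuk_le : ∀ (k : ℕ) (s : ℝ), 1 < s → s ≤ u → muk (k+1) s v ≤ u^(k+1) / (k+1).factorial := by
    intro k s hs hsu
    refine (muk_le (k+1) (by omega) s v hs hv0 hv).trans ?_
    gcongr
  have hsa : Summable a := by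
    refine Summable.of_nonneg_of_le (fun k => ?_) (fun k => ?_) hbsum
    · exact mul_nonneg (pow_nonneg hκ.le _)
        (mul_nonneg hu0.le (muk_nonneg (k+1) (by omega) u v hu1))
    · have h1 : muk (k+1) u v ≤ u^(k+1) / (k+1).factorial := hmuk_le k u hu1 le_rfl
      have h2 : κ^(k+1) * (u * muk (k+1) u v) ≤ κ^(k+1) * (u * (u^(k+1) / (k+1).factorial)) := by
        refine mul_le_mul_of_nonneg_left ?_ (pow_nonneg hκ.le _)
        exact mul_le_mul_of_nonneg_left h1 hu0.le
      refine h2.trans_eq ?_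
      rw [mul_pow]
      ring
  -- a.e. measurability of the summands on `Ioc (u-1) u`
  have hmeas : ∀ k : ℕ, AEStronglyMeasurable (fun s => κ^(k+1) * muk (k+1) s v)
      (volume.restrict (Set.Ioc (u-1) u)) := by
    intro k
    refine (((measurable_mukAux (k+1) v).const_mul (κ^(k+1))).aestronglyMeasurable).congr ?_
    filter_upwards [ae_restrict_mem measurableSet_Ioc] with s hs
    rw [muk_eq_mukAux (k+1) (by omega) v (by linarith [hs.1] : 1 < s)]
  -- uniform bound of the lintegrals
  have hC : ∀ k : ℕ, ∫⁻ s, ‖κ^(k+1) * muk (k+1) s v‖₊ ∂(volume.restrict (Set.Ioc (u-1) u))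
      ≤ ENNReal.ofReal (κ^(k+1) * (u^(k+1) / (k+1).factorial)) := by
    intro k
    have hpt : ∀ᵐ s ∂(volume.restrict (Set.Ioc (u-1) u)),
        (‖κ^(k+1) * muk (k+1) s v‖₊ : ENNReal)
          ≤ ENNReal.ofReal (κ^(k+1) * (u^(k+1) / (k+1).factorial)) := by
      filter_upwards [ae_restrict_mem measurableSet_Ioc] with s hs
      have hs1 : 1 < s := by linarith [hs.1]
      have hnn : 0 ≤ κ^(k+1) * muk (k+1) s v :=
        mul_nonneg (pow_nonneg hκ.le _) (muk_nonneg (k+1) (by omega) s v hs1)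
      rw [← enorm_eq_nnnorm, Real.enorm_eq_ofReal hnn]
      exact ENNReal.ofReal_le_ofReal (mul_le_mul_of_nonneg_left
        (hmuk_le k s hs1 hs.2) (pow_nonneg hκ.le _))
    calc ∫⁻ s, ‖κ^(k+1) * muk (k+1) s v‖₊ ∂(volume.restrict (Set.Ioc (u-1) u))
        ≤ ∫⁻ _, ENNReal.ofReal (κ^(k+1) * (u^(k+1) / (k+1).factorial))
            ∂(volume.restrict (Set.Ioc (u-1) u)) := lintegral_mono_ae hpt
      _ = ENNReal.ofReal (κ^(k+1) * (u^(k+1) / (k+1).factorial)) := by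
          rw [lintegral_const, Measure.restrict_apply_univ, Real.volume_Ioc,
            show u - (u-1) = 1 by ring, ENNReal.ofReal_one, mul_one]
  -- the swap
  have hswap : ∫ s in Set.Ioc (u-1) u, ∑' k : ℕ, κ^(k+1) * muk (k+1) s v
      = ∑' k : ℕ, ∫ s in Set.Ioc (u-1) u, κ^(k+1) * muk (k+1) s v := by
    refine integral_tsum hmeas ?_
    refine ne_of_lt ?_
    have hnn : ∀ k : ℕ, 0 ≤ κ^(k+1) * (u^(k+1) / ((k+1).factorial : ℝ)) := fun k =>
      mul_nonneg (pow_nonneg hκ.le _) (div_nonneg (pow_nonneg hu0.le _)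
        (Nat.cast_nonneg _))
    have hsumb : Summable (fun k : ℕ => κ^(k+1) * (u^(k+1) / ((k+1).factorial : ℝ))) := by
      refine ((summable_nat_add_iff 1).2 (Real.summable_pow_div_factorial (κ*u))).congr fun k => ?_
      rw [mul_pow]; ring
    calc ∑' k : ℕ, ∫⁻ s, ‖κ^(k+1) * muk (k+1) s v‖₊ ∂(volume.restrict (Set.Ioc (u-1) u))
        ≤ ∑' k : ℕ, ENNReal.ofReal (κ^(k+1) * (u^(k+1) / (k+1).factorial)) :=
          ENNReal.tsum_le_tsum hC
      _ = ENNReal.ofReal (∑' k : ℕ, κ^(k+1) * (u^(k+1) / ((k+1).factorial : ℝ))) :=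
          (ENNReal.ofReal_tsum_of_nonneg hnn hsumb).symm
      _ < ⊤ := ENNReal.ofReal_lt_top
  -- main computation
  calc u * mukappa κ u v = ∑' k : ℕ, a k := by
        rw [mukappa, ← tsum_mul_left]
        exact tsum_congr fun k => by rw [ha]; ring
    _ = ∑' k : ℕ, a (k+1) := by
        rw [Summable.tsum_eq_zero_add hsa]
        have : a 0 = 0 := by
          simp only [ha, zero_add, pow_one]
          rw [muk_one_eq_zero u v hu hv0]
          ring
        rw [this, zero_add]
    _ = ∑' k : ℕ, κ^(k+2) * ∫ s in Set.Ioc (u-1) u, muk (k+1) s v := by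
        refine tsum_congr fun k => ?_
        rw [ha]
        simp only []
        rw [key_recursion (k+1) (by omega) u v hu hv0 hv, intervalIntegral.integral_of_le hle]
    _ = κ * ∑' k : ℕ, ∫ s in Set.Ioc (u-1) u, κ^(k+1) * muk (k+1) s v := by
        rw [← tsum_mul_left]
        refine tsum_congr fun k => ?_
        rw [integral_const_mul]
        ring
    _ = κ * ∫ s in Set.Ioc (u-1) u, ∑' k : ℕ, κ^(k+1) * muk (k+1) s v := by rw [hswap]
    _ = κ * ∫ s in (u-1)..u, mukappa κ s v := by
        rw [intervalIntegral.integral_of_le hle]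
        rfl

end Main
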